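/- arXiv:math/9704211 — 7 statements merged into one kernel-verified Lean document; each statement's English description precedes it below -/
import Mathlib

section
/- For every p with 1 < p < ∞, the function |x|^{-1/p} on ℝ \ {0} is an eigenfunction of the centered Hardy–Littlewood maximal operator: there exists a constant c_p > 0 such that for all x ≠ 0, sup over δ > 0 of (1/(2δ)) ∫_{x-δ}^{x+δ} |t|^{-1/p} dt equals c_p · |x|^{-1/p}. -/
open MeasureTheory Set

/-- Centered Hardy–Littlewood maximal function on the line. -/
noncomputable def centeredMaximal (f : ℝ → ℝ) (x : ℝ) : ℝ :=
  ⨆ δ : {δ : ℝ // 0 < δ}, (1 / (2 * δ.1)) * ∫ t in x - δ.1..x + δ.1, |f t|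

namespace MaximalAux

lemma real_iSup_equiv {ι ι' : Sort*} (e : ι ≃ ι') (f : ι' → ℝ) :
    ⨆ x, f (e x) = ⨆ y, f y := by
  rw [iSup, iSup, ← e.surjective.range_comp f]
  rfl

variable {r : ℝ}

lemma intInt (hr : -1 < r) (a b : ℝ) :
    IntervalIntegrable (fun t => |t| ^ r) volume a b := by
  suffices h : ∀ c : ℝ, IntervalIntegrable (fun t => |t| ^ r) volume 0 c from
    (h a).symm.trans (h b)
  have key : ∀ c : ℝ, 0 ≤ c → IntervalIntegrable (fun t => |t| ^ r) volume 0 c := by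
    intro c hc
    have base := intervalIntegral.intervalIntegrable_rpow' (a := 0) (b := c) hr
    rw [intervalIntegrable_iff] at base ⊢
    refine base.congr_fun ?_ measurableSet_uIoc
    intro t ht
    rw [uIoc_of_le hc] at ht
    simp [abs_of_pos ht.1]
  intro c
  rcases le_total 0 c with hc | hc
  · exact key c hc
  · rw [IntervalIntegrable.iff_comp_neg]
    simpa using key (-c) (by linarith)

lemma intVal (hr : -1 < r) {b : ℝ} (hb : 0 ≤ b) :
    ∫ t in (0:ℝ)..b, |t| ^ r = b ^ (r + 1) / (r + 1) := by
  have : ∫ t in (0:ℝ)..b, |t| ^ r = ∫ t in (0:ℝ)..b, t ^ r := by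
    refine intervalIntegral.integral_congr ?_
    intro t ht
    rw [uIcc_of_le hb] at ht
    simp [abs_of_nonneg ht.1]
  rw [this, integral_rpow (Or.inl hr), Real.zero_rpow (by linarith), sub_zero]

lemma evenInt (a b : ℝ) :
    ∫ t in a..b, |t| ^ r = ∫ t in (-b)..(-a), |t| ^ r := by
  have := intervalIntegral.integral_comp_neg (a := a) (b := b) (fun t : ℝ => |t| ^ r)
  simpa using this

end MaximalAux

open MaximalAux in
theorem maximal_rpow_eigenfunction (p : ℝ) (hp : 1 < p) :
    ∃ c : ℝ, 0 < c ∧ ∀ x : ℝ, x ≠ 0 →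
      centeredMaximal (fun t => |t| ^ (-(1 / p))) x = c * |x| ^ (-(1 / p)) := by
  set r : ℝ := -(1 / p) with hrdef
  have hp0 : 0 < 1 / p := by positivity
  have hp1 : 1 / p < 1 := by
    rw [div_lt_one (by linarith)]; linarith
  have hr1 : -1 < r := by simp only [hrdef]; linarith
  have hr0 : r < 0 := by simp only [hrdef]; linarith
  have hq : 0 < r + 1 := by linarith
  -- the maximal function with the absolute value on the integrand removed
  have habs : ∀ t : ℝ, |(|t| ^ r)| = |t| ^ r := fun t =>
    abs_of_nonneg (Real.rpow_nonneg (abs_nonneg t) r)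
  have hCM : ∀ x : ℝ, centeredMaximal (fun t => |t| ^ r) x
      = ⨆ δ : {δ : ℝ // 0 < δ}, (1 / (2 * δ.1)) * ∫ t in x - δ.1..x + δ.1, |t| ^ r := by
    intro x
    unfold centeredMaximal
    simp only [habs]
  -- the family of averages at x = 1
  set T : {δ : ℝ // 0 < δ} → ℝ :=
    fun δ => (1 / (2 * δ.1)) * ∫ t in (1:ℝ) - δ.1..1 + δ.1, |t| ^ r with hT
  -- boundedness of the averages at x = 1
  have hbdd : BddAbove (Set.range T) := by
    refine ⟨max ((1/2 : ℝ) ^ r) (6 / (r + 1)), ?_⟩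
    rintro _ ⟨⟨δ, hδ⟩, rfl⟩
    simp only [hT]
    rcases le_total δ (1/2) with hhalf | hhalf
    · -- small radius: pointwise bound |t|^r ≤ (1/2)^r on [1-δ, 1+δ]
      refine le_trans ?_ (le_max_left _ _)
      have hmono : ∫ t in (1:ℝ) - δ..1 + δ, |t| ^ r
          ≤ ∫ _t in (1:ℝ) - δ..1 + δ, (1/2 : ℝ) ^ r := by
        refine intervalIntegral.integral_mono_on (by linarith) (intInt hr1 _ _)
          intervalIntegrable_const ?_
        intro t ht
        have h1 : (1/2 : ℝ) ≤ t := by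
          rcases ht with ⟨h1, h2⟩; linarith
        have : (1/2 : ℝ) ≤ |t| := le_trans h1 (le_abs_self t)
        exact Real.rpow_le_rpow_of_nonpos (by norm_num) this hr0.le
      have hconst : ∫ _t in (1:ℝ) - δ..1 + δ, (1/2 : ℝ) ^ r = (2 * δ) * (1/2 : ℝ) ^ r := by
        rw [intervalIntegral.integral_const, smul_eq_mul]
        ring
      calc (1 / (2 * δ)) * ∫ t in (1:ℝ) - δ..1 + δ, |t| ^ r
          ≤ (1 / (2 * δ)) * ((2 * δ) * (1/2 : ℝ) ^ r) := by
            rw [← hconst]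
            exact mul_le_mul_of_nonneg_left hmono (by positivity)
        _ = (1/2 : ℝ) ^ r := by field_simp
    · -- large radius: compare with the symmetric interval around 0
      refine le_trans ?_ (le_max_right _ _)
      have hmono : ∫ t in (1:ℝ) - δ..1 + δ, |t| ^ r
          ≤ ∫ t in (-(1 + δ))..(1 + δ), |t| ^ r := by
        refine intervalIntegral.integral_mono_interval (by linarith) (by linarith) le_rfl
          ?_ (intInt hr1 _ _)
        filter_upwards with t using Real.rpow_nonneg (abs_nonneg t) r
      have hsplit : ∫ t in (-(1 + δ))..(1 + δ), |t| ^ r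
          = 2 * ((1 + δ) ^ (r + 1) / (r + 1)) := by
        have h1 : ∫ t in (-(1 + δ))..(0:ℝ), |t| ^ r = ∫ t in (0:ℝ)..(1 + δ), |t| ^ r := by
          rw [evenInt]; norm_num
        rw [← intervalIntegral.integral_add_adjacent_intervals (b := (0:ℝ))
          (intInt hr1 _ _) (intInt hr1 _ _), h1, intVal hr1 (by linarith)]
        ring
      have hkey : (1 + δ) ^ (r + 1) ≤ 6 * δ := by
        have h3 : (1 + δ) ≤ 3 * δ := by linarith
        have e1 : (1 + δ) ^ (r + 1) ≤ (3 * δ) ^ (r + 1) :=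
          Real.rpow_le_rpow (by linarith) h3 hq.le
        have e2 : (3 * δ) ^ (r + 1) = 3 ^ (r + 1) * δ ^ (r + 1) :=
          Real.mul_rpow (by norm_num) (by linarith)
        have e3 : (3:ℝ) ^ (r + 1) ≤ 3 := by
          calc (3:ℝ) ^ (r + 1) ≤ 3 ^ (1:ℝ) :=
              Real.rpow_le_rpow_of_exponent_le (by norm_num) (by linarith)
            _ = 3 := Real.rpow_one 3
        have e4 : δ ^ (r + 1) ≤ 2 * δ := by
          have : δ ^ (r + 1) = δ ^ (r:ℝ) * δ := by
            rw [← Real.rpow_add_one (by positivity) r]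
          rw [this]
          have h5 : δ ^ (r:ℝ) ≤ (1/2 : ℝ) ^ (r:ℝ) :=
            Real.rpow_le_rpow_of_nonpos (by norm_num) hhalf hr0.le
          have hh : (1/2 : ℝ) ^ (r:ℝ) = 2 ^ (-r) := by
            rw [one_div, Real.inv_rpow (by norm_num : (0:ℝ) ≤ 2),
              ← Real.rpow_neg (by norm_num : (0:ℝ) ≤ 2)]
          have h6 : (1/2 : ℝ) ^ (r:ℝ) ≤ 2 := by
            rw [hh]
            calc (2:ℝ) ^ (-r) ≤ 2 ^ (1:ℝ) :=
                Real.rpow_le_rpow_of_exponent_le (by norm_num) (by linarith)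
              _ = 2 := Real.rpow_one 2
          nlinarith [Real.rpow_nonneg hδ.le r]
        calc (1 + δ) ^ (r + 1) ≤ 3 ^ (r + 1) * δ ^ (r + 1) := by rw [← e2]; exact e1
          _ ≤ 3 * (2 * δ) := by
            have := Real.rpow_nonneg (show (0:ℝ) ≤ δ by linarith) (r + 1)
            nlinarith [Real.rpow_nonneg (show (0:ℝ) ≤ 3 by norm_num) (r + 1)]
          _ = 6 * δ := by ring
      calc (1 / (2 * δ)) * ∫ t in (1:ℝ) - δ..1 + δ, |t| ^ r
          ≤ (1 / (2 * δ)) * (2 * ((1 + δ) ^ (r + 1) / (r + 1))) := by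
            rw [← hsplit]
            exact mul_le_mul_of_nonneg_left hmono (by positivity)
        _ = (1 + δ) ^ (r + 1) / ((r + 1) * δ) := by field_simp
        _ ≤ 6 * δ / ((r + 1) * δ) := by
            have hd : (0:ℝ) < (r + 1) * δ := mul_pos hq hδ
            exact div_le_div_of_nonneg_right hkey hd.le
        _ = 6 / (r + 1) := by
            field_simp
  -- the constant
  set c : ℝ := ⨆ δ : {δ : ℝ // 0 < δ}, T δ with hc
  have hc1 : centeredMaximal (fun t => |t| ^ r) 1 = c := by rw [hCM 1]
  have hcpos : 0 < c := by
    have hle : T ⟨1, one_pos⟩ ≤ c := le_ciSup hbdd _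
    have hval : T ⟨1, one_pos⟩ = (1/2 : ℝ) * (2 ^ (r + 1) / (r + 1)) := by
      simp only [hT]
      norm_num
      rw [intVal hr1 (by norm_num : (0:ℝ) ≤ 2)]
    have : 0 < T ⟨1, one_pos⟩ := by
      rw [hval]
      have : (0:ℝ) < 2 ^ (r + 1) := Real.rpow_pos_of_pos (by norm_num) _
      positivity
    linarith
  -- scaling for positive x
  have hscale : ∀ x : ℝ, 0 < x →
      centeredMaximal (fun t => |t| ^ r) x = x ^ r * c := by
    intro x hx
    rw [hCM x, hc]
    set e : {δ : ℝ // 0 < δ} ≃ {δ : ℝ // 0 < δ} :=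
      { toFun := fun δ => ⟨x * δ.1, mul_pos hx δ.2⟩
        invFun := fun δ => ⟨x⁻¹ * δ.1, mul_pos (inv_pos.mpr hx) δ.2⟩
        left_inv := fun δ => by
          ext; simp only []; field_simp
        right_inv := fun δ => by
          ext; simp only []; field_simp } with he
    rw [← real_iSup_equiv e (fun δ : {δ : ℝ // 0 < δ} =>
      (1 / (2 * δ.1)) * ∫ t in x - δ.1..x + δ.1, |t| ^ r),
      Real.mul_iSup_of_nonneg (Real.rpow_nonneg hx.le r)]
    refine iSup_congr fun δ => ?_
    obtain ⟨ε, hε⟩ := δ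
    simp only [he, Equiv.coe_fn_mk, hT]
    have hsub : ∫ t in x - x * ε..x + x * ε, |t| ^ r
        = x * (x ^ r * ∫ t in (1:ℝ) - ε..1 + ε, |t| ^ r) := by
      have h1 : ∫ s in (1:ℝ) - ε..1 + ε, |x * s| ^ r
          = x⁻¹ • ∫ t in x * (1 - ε)..x * (1 + ε), |t| ^ r :=
        intervalIntegral.integral_comp_mul_left (fun t => |t| ^ r) hx.ne'
      have h2 : ∀ s : ℝ, |x * s| ^ r = x ^ r * |s| ^ r := by
        intro s
        rw [abs_mul, abs_of_pos hx, Real.mul_rpow hx.le (abs_nonneg s)]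
      simp only [h2] at h1
      rw [intervalIntegral.integral_const_mul] at h1
      have h3 : x * (1 - ε) = x - x * ε := by ring
      have h4 : x * (1 + ε) = x + x * ε := by ring
      rw [h3, h4, smul_eq_mul] at h1
      field_simp at h1 ⊢
      linarith [h1]
    rw [hsub]
    have hx2 : (2 : ℝ) * (x * ε) ≠ 0 := by positivity
    field_simp
  -- evenness
  have heven : ∀ x : ℝ, centeredMaximal (fun t => |t| ^ r) (-x)
      = centeredMaximal (fun t => |t| ^ r) x := by
    intro x
    rw [hCM, hCM]
    refine iSup_congr fun δ => ?_
    congr 1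
    rw [evenInt (a := -x - δ.1) (b := -x + δ.1)]
    congr 1 <;> ring
  refine ⟨c, hcpos, fun x hx => ?_⟩
  rcases lt_or_gt_of_ne hx with hneg | hpos
  · have h1 : centeredMaximal (fun t => |t| ^ r) x
        = centeredMaximal (fun t => |t| ^ r) (-(-x)) := by rw [neg_neg]
    rw [h1, heven, hscale (-x) (by linarith), abs_of_neg hneg]
    ring
  · rw [hscale x hpos, abs_of_pos hpos]
    ring
end

section
/- For 1 < p < ∞ and x ≠ 0, the value of the centered maximal function of |t|^{-1/p} at x equals c_p |x|^{-1/p}, where c_p = sup_{τ>1} ((τ+1)^{(p-1)/p} + (τ-1)^{(p-1)/p}) / (2 τ (p-1)/p). -/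
open MeasureTheory Set

open Real

lemma key_scalar_ineq {α : ℝ} (hα : 0 < α) (hα1 : α ≤ 1) {s : ℝ}
    (hs0 : 0 ≤ s) (hs1 : s ≤ 1) :
    (1 + s) ^ α - (1 - s) ^ α ≤ s * 2 ^ α := by
  set χ : ℝ → ℝ := fun s => ((1 + s) / 2) ^ α - ((1 - s) / 2) ^ α with hχ
  have hconv : ConvexOn ℝ (Icc (0:ℝ) 1) χ := by
    apply convexOn_of_hasDerivWithinAt2_nonneg (f' := fun s =>
        α / 2 * ((1 + s) / 2) ^ (α - 1) + α / 2 * ((1 - s) / 2) ^ (α - 1))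
      (f'' := fun s => α * (α - 1) / 4 *
        (((1 + s) / 2) ^ (α - 2) - ((1 - s) / 2) ^ (α - 2)))
      (convex_Icc 0 1)
    · -- continuity
      intro t ht
      apply ContinuousWithinAt.sub
      · exact ((Real.continuousAt_rpow_const _ _ (Or.inr hα.le)).comp
          (by fun_prop)).continuousWithinAt
      · exact ((Real.continuousAt_rpow_const _ _ (Or.inr hα.le)).comp
          (by fun_prop)).continuousWithinAt
    · rw [interior_Icc]
      intro t ht
      have h1 : (0:ℝ) < (1 + t) / 2 := by cases ht; linarith
      have h2 : (0:ℝ) < (1 - t) / 2 := by cases ht; linarith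
      have d1 : HasDerivAt (fun s : ℝ => (1 + s) / 2) (1/2) t := by
        simpa using ((hasDerivAt_id t).const_add 1).div_const 2
      have d2 : HasDerivAt (fun s : ℝ => (1 - s) / 2) (-(1/2)) t := by
        have := ((hasDerivAt_id t).const_sub 1).div_const 2
        norm_num at this ⊢
        convert this using 1
      have D1 := (Real.hasDerivAt_rpow_const (p := α) (Or.inl h1.ne')).comp t d1
      have D2 := (Real.hasDerivAt_rpow_const (p := α) (Or.inl h2.ne')).comp t d2
      have := (D1.sub D2)
      convert this.hasDerivWithinAt using 1
      rfl
      rfl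
      · funext s; rfl
      ring
    · rw [interior_Icc]
      intro t ht
      have h1 : (0:ℝ) < (1 + t) / 2 := by cases ht; linarith
      have h2 : (0:ℝ) < (1 - t) / 2 := by cases ht; linarith
      have d1 : HasDerivAt (fun s : ℝ => (1 + s) / 2) (1/2) t := by
        simpa using ((hasDerivAt_id t).const_add 1).div_const 2
      have d2 : HasDerivAt (fun s : ℝ => (1 - s) / 2) (-(1/2)) t := by
        have := ((hasDerivAt_id t).const_sub 1).div_const 2
        norm_num at this ⊢
        convert this using 1
      have D1 := (Real.hasDerivAt_rpow_const (p := α - 1) (Or.inl h1.ne')).comp t d1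
      have D2 := (Real.hasDerivAt_rpow_const (p := α - 1) (Or.inl h2.ne')).comp t d2
      have := (D1.const_mul (α / 2)).add (D2.const_mul (α / 2))
      convert this.hasDerivWithinAt using 1
      rfl
      rfl
      · funext s; rfl
      have e1 : α - 1 - 1 = α - 2 := by ring
      rw [e1]
      ring
    · rw [interior_Icc]
      intro t ht
      have h1 : (0:ℝ) < (1 + t) / 2 := by cases ht; linarith
      have h2 : (0:ℝ) < (1 - t) / 2 := by cases ht; linarith
      have hb : ((1 + t) / 2 : ℝ) ^ (α - 2) ≤ ((1 - t) / 2) ^ (α - 2) :=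
        Real.rpow_le_rpow_of_nonpos h2 (by cases ht; linarith) (by linarith)
      have : α * (α - 1) / 4 ≤ 0 := by nlinarith
      nlinarith [sub_nonpos.mpr hb]
  -- now apply convexity at the endpoints 0 and 1
  have h0 : χ 0 = 0 := by simp [hχ]
  have h1 : χ 1 = 1 := by norm_num [hχ, Real.zero_rpow hα.ne']
  have hmem0 : (0:ℝ) ∈ Icc (0:ℝ) 1 := by norm_num
  have hmem1 : (1:ℝ) ∈ Icc (0:ℝ) 1 := by norm_num
  have hcs := hconv.2 hmem0 hmem1 (by linarith : (0:ℝ) ≤ 1 - s) hs0 (by ring)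
  rw [smul_eq_mul, smul_eq_mul, smul_eq_mul, smul_eq_mul, mul_zero, zero_add, mul_one,
    h0, h1, mul_zero, mul_one, zero_add] at hcs
  -- hcs : χ s ≤ s
  have e1 : (1 + s) ^ α = 2 ^ α * ((1 + s) / 2) ^ α := by
    rw [← Real.mul_rpow (by norm_num) (by linarith)]
    norm_num
    ring_nf
  have e2 : (1 - s) ^ α = 2 ^ α * ((1 - s) / 2) ^ α := by
    rw [← Real.mul_rpow (by norm_num) (by linarith)]
    norm_num
    ring_nf
  have h2α : (0:ℝ) ≤ 2 ^ α := Real.rpow_nonneg (by norm_num) _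
  have : χ s ≤ s := hcs
  rw [e1, e2]
  calc 2 ^ α * ((1 + s) / 2) ^ α - 2 ^ α * ((1 - s) / 2) ^ α = 2 ^ α * χ s := by rw [hχ]; ring
    _ ≤ 2 ^ α * s := by nlinarith
    _ = s * 2 ^ α := by ring

lemma intervalIntegrable_abs_rpow {r : ℝ} (hr : -1 < r) (a b : ℝ) :
    IntervalIntegrable (fun t : ℝ => |t| ^ r) volume a b := by
  have h0 : ∀ c : ℝ, 0 ≤ c → IntervalIntegrable (fun t : ℝ => |t| ^ r) volume 0 c := by
    intro c hc
    apply (intervalIntegral.intervalIntegrable_rpow' (a := 0) (b := c) hr).congr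
    have hmeas : MeasurableSet (Set.uIoc (0:ℝ) c) := measurableSet_uIoc
    intro t ht
    rw [uIoc_of_le hc] at ht
    show t ^ r = |t| ^ r
    rw [abs_of_pos ht.1]
  have hgen : ∀ c : ℝ, IntervalIntegrable (fun t : ℝ => |t| ^ r) volume 0 c := by
    intro c
    rcases le_or_gt 0 c with hc | hc
    · exact h0 c hc
    · refine (IntervalIntegrable.iff_comp_neg (by simp)).mpr ?_
      have he : (fun x : ℝ => |(-x)| ^ r) = fun x : ℝ => |x| ^ r := by
        funext x; rw [abs_neg]
      rw [he]
      simpa using h0 (-c) (by linarith)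
  exact (hgen a).symm.trans (hgen b)

/-- Integral of `|t|^r` on `[a,b] ⊆ [0,∞)`. -/
lemma integral_abs_rpow_nonneg {r : ℝ} (hr : -1 < r) {a b : ℝ} (ha : 0 ≤ a) (hab : a ≤ b) :
    ∫ t in a..b, |t| ^ r = (b ^ (r + 1) - a ^ (r + 1)) / (r + 1) := by
  rw [← integral_rpow (Or.inl hr)]
  apply intervalIntegral.integral_congr
  intro t ht
  rw [uIcc_of_le hab] at ht
  show |t| ^ r = t ^ r
  rw [abs_of_nonneg (le_trans ha ht.1)]

/-- Integral across the origin. -/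
lemma integral_abs_rpow_cross {r : ℝ} (hr : -1 < r) {a b : ℝ} (ha : a ≤ 0) (hb : 0 ≤ b) :
    ∫ t in a..b, |t| ^ r = (b ^ (r + 1) + (-a) ^ (r + 1)) / (r + 1) := by
  have h1 : ∫ t in a..(0:ℝ), |t| ^ r = (-a) ^ (r + 1) / (r + 1) := by
    have hrefl : (∫ t in (0:ℝ)..(-a), |(-t)| ^ r) = ∫ t in a..(0:ℝ), |t| ^ r := by
      simpa using intervalIntegral.integral_comp_neg (a := (0:ℝ)) (b := -a)
        (f := fun t => |t| ^ r)
    have heq : (∫ t in (0:ℝ)..(-a), |(-t)| ^ r) = ∫ t in (0:ℝ)..(-a), |t| ^ r := by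
      apply intervalIntegral.integral_congr
      intro t _
      show |(-t)| ^ r = |t| ^ r
      rw [abs_neg]
    rw [← hrefl, heq, integral_abs_rpow_nonneg hr le_rfl (by linarith)]
    rw [Real.zero_rpow (by linarith : r + 1 ≠ 0)]
    ring
  have h2 : ∫ t in (0:ℝ)..b, |t| ^ r = b ^ (r + 1) / (r + 1) := by
    rw [integral_abs_rpow_nonneg hr le_rfl hb, Real.zero_rpow (by linarith : r + 1 ≠ 0)]
    ring
  rw [← intervalIntegral.integral_add_adjacent_intervals
    (intervalIntegrable_abs_rpow hr a 0) (intervalIntegrable_abs_rpow hr 0 b), h1, h2]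
  ring


theorem maximal_rpow_eq_cp (p : ℝ) (hp : 1 < p) (x : ℝ) (hx : x ≠ 0) :
    centeredMaximal (fun t => |t| ^ (-(1 / p))) x =
      (⨆ τ : {τ : ℝ // 1 < τ},
        ((τ.1 + 1) ^ ((p - 1) / p) + (τ.1 - 1) ^ ((p - 1) / p)) / (2 * τ.1 * ((p - 1) / p)))
        * |x| ^ (-(1 / p)) := by
  have hp0 : (0:ℝ) < p := by linarith
  set q : ℝ := 1 / p with hqdef
  set α : ℝ := (p - 1) / p with hαdef
  have hq0 : 0 < q := by rw [hqdef]; positivity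
  have hq1 : q < 1 := by rw [hqdef, div_lt_one hp0]; linarith
  have hα0 : 0 < α := by rw [hαdef]; apply div_pos <;> linarith
  have hα1 : α < 1 := by rw [hαdef, div_lt_one hp0]; linarith
  have hαq : α = 1 - q := by rw [hαdef, hqdef]; field_simp
  have hrq : (-1:ℝ) < -q := by linarith
  have hr1 : -q + 1 = α := by rw [hαq]; ring
  set y : ℝ := |x| with hydef
  have hy0 : 0 < y := hydef ▸ abs_pos.mpr hx
  clear_value q α y
  haveI : Nonempty {δ : ℝ // 0 < δ} := ⟨⟨1, one_pos⟩⟩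
  haveI : Nonempty {τ : ℝ // 1 < τ} := ⟨⟨2, one_lt_two⟩⟩
  set H : {τ : ℝ // 1 < τ} → ℝ :=
    fun τ => ((τ.1 + 1) ^ α + (τ.1 - 1) ^ α) / (2 * τ.1 * α) with hHdef
  set A : {δ : ℝ // 0 < δ} → ℝ :=
    fun δ => (1 / (2 * δ.1)) * ∫ t in y - δ.1..y + δ.1, |t| ^ (-q) with hAdef
  -- Step 1: centeredMaximal equals ⨆ A
  have hstep1 : centeredMaximal (fun t => |t| ^ (-q)) x = ⨆ δ, A δ := by
    unfold centeredMaximal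
    apply iSup_congr
    intro δ
    simp only [hAdef]
    have habs : ∀ c d : ℝ, (∫ t in c..d, |(|t| ^ (-q))|) = ∫ t in c..d, |t| ^ (-q) := by
      intro c d
      apply intervalIntegral.integral_congr
      intro t _
      show |(|t| ^ (-q))| = |t| ^ (-q)
      rw [abs_of_nonneg (Real.rpow_nonneg (abs_nonneg t) _)]
    rcases le_or_gt 0 x with hx0 | hx0
    · have hxy : y = x := hydef ▸ abs_of_nonneg hx0
      rw [habs, hxy]
    · have hyx : y = -x := hydef ▸ abs_of_neg hx0
      have hrefl := intervalIntegral.integral_comp_neg (a := y - δ.1) (b := y + δ.1)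
        (f := fun t => |t| ^ (-q))
      have heq : (∫ t in (y - δ.1)..(y + δ.1), |(-t)| ^ (-q))
          = ∫ t in (y - δ.1)..(y + δ.1), |t| ^ (-q) := by
        apply intervalIntegral.integral_congr
        intro t _; show |(-t)| ^ (-q) = |t| ^ (-q); rw [abs_neg]
      rw [heq] at hrefl
      have e1 : x - δ.1 = -(y + δ.1) := by rw [hyx]; ring
      have e2 : x + δ.1 = -(y - δ.1) := by rw [hyx]; ring
      rw [habs, e1, e2, ← hrefl]
  rw [hstep1]
  -- value of A for δ > y
  have hAval : ∀ δ : {δ : ℝ // 0 < δ}, ∀ hδ : y < δ.1,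
      A δ = H ⟨δ.1 / y, (one_lt_div hy0).mpr hδ⟩ * y ^ (-q) := by
    intro δ hδ
    have hd0 : 0 < δ.1 := δ.2
    simp only [hAdef, hHdef]
    rw [integral_abs_rpow_cross hrq (by linarith) (by linarith), hr1]
    have hτ1 : 1 < δ.1 / y := (one_lt_div hy0).mpr hδ
    have e1 : y + δ.1 = y * (δ.1 / y + 1) := by field_simp; ring
    have e2 : -(y - δ.1) = y * (δ.1 / y - 1) := by field_simp; ring
    rw [e1, e2, Real.mul_rpow hy0.le (by linarith),
      Real.mul_rpow hy0.le (by linarith)]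
    have e3 : y ^ α = y * y ^ (-q) := by
      rw [hαq, show (1:ℝ) - q = 1 + (-q) by ring, Real.rpow_add hy0, Real.rpow_one]
    rw [e3]
    have hτ0 : δ.1 / y ≠ 0 := (div_pos hd0 hy0).ne'
    field_simp
    try ring
  -- bound for A when δ ≤ y
  have hAle : ∀ δ : {δ : ℝ // 0 < δ}, δ.1 ≤ y → A δ ≤ 2 ^ α / (2 * α) * y ^ (-q) := by
    intro δ hδ
    have hd0 : 0 < δ.1 := δ.2
    simp only [hAdef]
    rw [integral_abs_rpow_nonneg hrq (by linarith) (by linarith), hr1]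
    have hs0 : 0 ≤ δ.1 / y := (div_pos hd0 hy0).le
    have hs1 : δ.1 / y ≤ 1 := (div_le_one hy0).mpr hδ
    have key := key_scalar_ineq hα0 hα1.le hs0 hs1
    have e1 : y + δ.1 = y * (1 + δ.1 / y) := by field_simp
    have e2 : y - δ.1 = y * (1 - δ.1 / y) := by field_simp
    rw [e1, e2, Real.mul_rpow hy0.le (by linarith), Real.mul_rpow hy0.le (by linarith)]
    have e3 : y ^ α = y * y ^ (-q) := by
      rw [hαq, show (1:ℝ) - q = 1 + (-q) by ring, Real.rpow_add hy0, Real.rpow_one]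
    have hyα : (0:ℝ) ≤ y ^ α := Real.rpow_nonneg hy0.le _
    calc (1 / (2 * δ.1)) * ((y ^ α * (1 + δ.1/y) ^ α - y ^ α * (1 - δ.1/y) ^ α) / α)
        = (y ^ α * ((1 + δ.1/y) ^ α - (1 - δ.1/y) ^ α)) / (2 * δ.1 * α) := by ring
      _ ≤ (y ^ α * (δ.1 / y * 2 ^ α)) / (2 * δ.1 * α) := by
          gcongr
      _ = 2 ^ α / (2 * α) * y ^ (-q) := by
          rw [e3]; field_simp; try ring
  -- H is bounded above
  have hHbdd : ∀ τ : {τ : ℝ // 1 < τ}, H τ ≤ 2 / α := by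
    intro τ
    simp only [hHdef]
    have hτ1 : (1:ℝ) < τ.1 := τ.2
    have h1 : (τ.1 + 1) ^ α ≤ 2 * τ.1 := by
      calc (τ.1 + 1) ^ α ≤ (2 * τ.1) ^ α :=
            Real.rpow_le_rpow (by linarith) (by linarith) hα0.le
        _ ≤ (2 * τ.1) ^ (1:ℝ) :=
            Real.rpow_le_rpow_of_exponent_le (by linarith) hα1.le
        _ = 2 * τ.1 := Real.rpow_one _
    have h2 : (τ.1 - 1) ^ α ≤ 2 * τ.1 := by
      calc (τ.1 - 1) ^ α ≤ (2 * τ.1) ^ α :=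
            Real.rpow_le_rpow (by linarith) (by linarith) hα0.le
        _ ≤ (2 * τ.1) ^ (1:ℝ) :=
            Real.rpow_le_rpow_of_exponent_le (by linarith) hα1.le
        _ = 2 * τ.1 := Real.rpow_one _
    have hd : (0:ℝ) < 2 * τ.1 * α := by positivity
    rw [div_le_iff₀ hd]
    calc (τ.1 + 1) ^ α + (τ.1 - 1) ^ α ≤ 4 * τ.1 := by linarith
      _ = 2 / α * (2 * τ.1 * α) := by field_simp; ring
  have hHbddAbove : BddAbove (range H) := ⟨2 / α, by rintro _ ⟨τ, rfl⟩; exact hHbdd τ⟩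
  set c : ℝ := ⨆ τ, H τ with hcdef
  -- 2^α/(2α) ≤ c via continuity
  have hg1c : 2 ^ α / (2 * α) ≤ c := by
    have hτn : Filter.Tendsto (fun n : ℕ => 1 + 1/((n:ℝ)+1)) Filter.atTop (nhds 1) := by
      have h0 := tendsto_one_div_add_atTop_nhds_zero_nat (𝕜 := ℝ)
      simpa using (tendsto_const_nhds (x := (1:ℝ)) (f := Filter.atTop)).add h0
    have hc1 : ContinuousAt (fun τ : ℝ => ((τ + 1) ^ α + (τ - 1) ^ α) / (2 * τ * α)) 1 := by
      apply ContinuousAt.div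
      · apply ContinuousAt.add
        · exact ContinuousAt.rpow_const (by fun_prop) (Or.inr hα0.le)
        · exact ContinuousAt.rpow_const (by fun_prop) (Or.inr hα0.le)
      · fun_prop
      · exact (by positivity : (0:ℝ) < 2 * 1 * α).ne'
    have hcomp := hc1.tendsto.comp hτn
    have hval : (((1:ℝ) + 1) ^ α + ((1:ℝ) - 1) ^ α) / (2 * 1 * α) = 2 ^ α / (2 * α) := by
      norm_num [Real.zero_rpow hα0.ne']
    rw [← hval]
    apply le_of_tendsto hcomp
    filter_upwards [] with n
    have hn1 : (1:ℝ) < 1 + 1/((n:ℝ)+1) := by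
      have : (0:ℝ) < 1/((n:ℝ)+1) := by positivity
      linarith
    exact le_ciSup hHbddAbove ⟨1 + 1/((n:ℝ)+1), hn1⟩
  -- upper bound for all A
  have hub : ∀ δ : {δ : ℝ // 0 < δ}, A δ ≤ c * y ^ (-q) := by
    intro δ
    have hyq : (0:ℝ) ≤ y ^ (-q) := Real.rpow_nonneg hy0.le _
    rcases le_or_gt δ.1 y with h | h
    · exact le_trans (hAle δ h) (mul_le_mul_of_nonneg_right hg1c hyq)
    · rw [hAval δ h]
      exact mul_le_mul_of_nonneg_right (le_ciSup hHbddAbove _) hyq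
  have hAbdd : BddAbove (range A) := ⟨c * y ^ (-q), by rintro _ ⟨δ, rfl⟩; exact hub δ⟩
  apply le_antisymm
  · exact ciSup_le hub
  · have hyq : (0:ℝ) < y ^ (-q) := Real.rpow_pos_of_pos hy0 _
    rw [← le_div_iff₀ hyq]
    apply ciSup_le
    intro τ
    rw [le_div_iff₀ hyq]
    have hδpos : 0 < τ.1 * y := mul_pos (lt_trans one_pos τ.2) hy0
    have hδy : y < τ.1 * y := by nlinarith [τ.2]
    have hAv := hAval ⟨τ.1 * y, hδpos⟩ hδy
    have hss : (⟨(⟨τ.1 * y, hδpos⟩ : {δ : ℝ // 0 < δ}).1 / y, (one_lt_div hy0).mpr hδy⟩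
        : {τ : ℝ // 1 < τ}) = τ := by
      apply Subtype.ext
      show τ.1 * y / y = τ.1
      field_simp
    rw [hss] at hAv
    rw [← hAv]
    exact le_ciSup hAbdd _
end

section
/- Let f : ℝ → ℝ be nonnegative, integrable, increasing on (-∞, c) and decreasing on (c, ∞) for some real number c. Then for every λ > 0, the Lebesgue measure of {x : (Mf)(x) > λ} is at most ‖f‖_{L¹}/λ, where M is the centered Hardy–Littlewood maximal operator. Moreover the constant 1 is best possible. -/
open MeasureTheory Set

private lemma exists_delta {f : ℝ → ℝ} (hf : ∀ x, 0 ≤ f x) {x lam : ℝ} (hlam : 0 < lam)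
    (hx : lam < centeredMaximal f x) :
    ∃ δ : ℝ, 0 < δ ∧ lam * (2 * δ) < ∫ t in x - δ..x + δ, f t := by
  unfold centeredMaximal at hx
  by_cases hb : BddAbove (range fun δ : {δ : ℝ // 0 < δ} =>
      (1 / (2 * δ.1)) * ∫ t in x - δ.1..x + δ.1, |f t|)
  · obtain ⟨⟨δ, hδ⟩, h⟩ := (lt_ciSup_iff hb).mp hx
    refine ⟨δ, hδ, ?_⟩
    simp only [fun t => abs_of_nonneg (hf t)] at h
    have h2δ : (0:ℝ) < 2 * δ := by linarith
    rw [one_div, inv_mul_eq_div, lt_div_iff₀ h2δ] at h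
    linarith
  · rw [Real.iSup_of_not_bddAbove hb] at hx
    linarith

private lemma exists_point {f : ℝ → ℝ} (hint : Integrable f) {x δ lam : ℝ} (hδ : 0 < δ)
    (h : lam * (2 * δ) < ∫ t in x - δ..x + δ, f t) :
    ∃ s ∈ Ioc (x - δ) (x + δ), lam < f s := by
  by_contra hcon
  push_neg at hcon
  have hle : x - δ ≤ x + δ := by linarith
  have h1 : ∫ t in x - δ..x + δ, f t ≤ lam * (2 * δ) := by
    rw [intervalIntegral.integral_of_le hle]
    calc ∫ t in Ioc (x - δ) (x + δ), f t
        ≤ ∫ _ in Ioc (x - δ) (x + δ), lam :=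
          setIntegral_mono_on hint.integrableOn
            ((integrableOn_const_iff).mpr (Or.inr (by
              rw [Real.volume_Ioc]; exact ENNReal.ofReal_lt_top))) measurableSet_Ioc hcon
      _ = lam * (2 * δ) := by
          rw [setIntegral_const, Real.volume_real_Ioc_of_le (by linarith),
            smul_eq_mul]
          ring
  linarith

private lemma pair_bound {f : ℝ → ℝ} {c : ℝ} (hf : ∀ x, 0 ≤ f x) (hint : Integrable f)
    (hmono : MonotoneOn f (Iio c)) (hanti : AntitoneOn f (Ioi c)) {lam : ℝ} (hlam : 0 < lam)
    {x y : ℝ} (hxy : x ≤ y) (hx : lam < centeredMaximal f x) (hy : lam < centeredMaximal f y) :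
    lam * (y - x) ≤ ∫ t, f t := by
  obtain ⟨δ₁, hδ₁, hA₁⟩ := exists_delta hf hlam hx
  obtain ⟨δ₂, hδ₂, hA₂⟩ := exists_delta hf hlam hy
  have hIle : ∀ a b : ℝ, a ≤ b → ∫ t in a..b, f t ≤ ∫ t, f t := by
    intro a b hab
    rw [intervalIntegral.integral_of_le hab]
    exact setIntegral_le_integral hint (Filter.Eventually.of_forall hf)
  by_cases h1 : y - x ≤ 2 * δ₁
  · have := hIle (x - δ₁) (x + δ₁) (by linarith)
    nlinarith
  by_cases h2 : y - x ≤ 2 * δ₂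
  · have := hIle (y - δ₂) (y + δ₂) (by linarith)
    nlinarith
  push_neg at h1 h2
  have hgap : x + δ₁ < y - δ₂ := by linarith
  obtain ⟨s, hs, hfs⟩ := exists_point hint hδ₁ hA₁
  obtain ⟨s', hs', hfs'⟩ := exists_point hint hδ₂ hA₂
  have hpt : ∀ t ∈ Ioc (x + δ₁) (y - δ₂), t ≠ c → lam ≤ f t := by
    intro t ht htc
    rcases lt_or_gt_of_ne htc with hlt | hgt
    · have hst : s ≤ t := le_trans hs.2 ht.1.le
      have := hmono (show s ∈ Iio c from lt_of_le_of_lt hst hlt) hlt hst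
      linarith
    · have hts : t ≤ s' := le_trans ht.2 hs'.1.le
      have := hanti (show t ∈ Ioi c from hgt) (show s' ∈ Ioi c from lt_of_lt_of_le hgt hts) hts
      linarith
  have hae : (fun _ : ℝ => lam) ≤ᵐ[volume.restrict (Ioc (x + δ₁) (y - δ₂))] f := by
    have h0 : ∀ᵐ t ∂(volume.restrict (Ioc (x + δ₁) (y - δ₂))), t ≠ c := by
      refine ae_restrict_of_ae ?_
      rw [ae_iff]
      have : {a : ℝ | ¬a ≠ c} = {c} := by ext t; simp
      rw [this]
      exact Real.volume_singleton
    have h1' := ae_restrict_mem (μ := volume) (measurableSet_Ioc : MeasurableSet (Ioc (x + δ₁) (y - δ₂)))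
    filter_upwards [h0, h1'] with t ht1 ht2
    exact hpt t ht2 ht1
  have hmid : lam * ((y - δ₂) - (x + δ₁)) ≤ ∫ t in x + δ₁..y - δ₂, f t := by
    rw [intervalIntegral.integral_of_le hgap.le]
    calc lam * ((y - δ₂) - (x + δ₁))
        = ∫ _ in Ioc (x + δ₁) (y - δ₂), lam := by
          rw [setIntegral_const, Real.volume_real_Ioc_of_le (by linarith),
            smul_eq_mul, mul_comm]
      _ ≤ ∫ t in Ioc (x + δ₁) (y - δ₂), f t :=
          integral_mono_ae
            ((integrableOn_const_iff).mpr (Or.inr (by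
              rw [Real.volume_Ioc]; exact ENNReal.ofReal_lt_top)))
            hint.integrableOn hae
  have i1 : IntervalIntegrable f volume (x - δ₁) (x + δ₁) := hint.intervalIntegrable
  have i2 : IntervalIntegrable f volume (x + δ₁) (y - δ₂) := hint.intervalIntegrable
  have i3 : IntervalIntegrable f volume (y - δ₂) (y + δ₂) := hint.intervalIntegrable
  have i23 : IntervalIntegrable f volume (x + δ₁) (y + δ₂) := hint.intervalIntegrable
  have e23 : (∫ t in x + δ₁..y - δ₂, f t) + ∫ t in y - δ₂..y + δ₂, f t
      = ∫ t in x + δ₁..y + δ₂, f t := intervalIntegral.integral_add_adjacent_intervals i2 i3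
  have e123 : (∫ t in x - δ₁..x + δ₁, f t) + ∫ t in x + δ₁..y + δ₂, f t
      = ∫ t in x - δ₁..y + δ₂, f t := intervalIntegral.integral_add_adjacent_intervals i1 i23
  have htot := hIle (x - δ₁) (y + δ₂) (by linarith)
  have hring : lam * (2 * δ₁) + lam * ((y - δ₂) - (x + δ₁)) + lam * (2 * δ₂)
      = lam * (y - x) + lam * (δ₁ + δ₂) := by ring
  have hpos : 0 ≤ lam * (δ₁ + δ₂) := by positivity
  linarith

/-- The indicator of `(0,1]`, a peak-shaped extremizer. -/
private noncomputable def gInd : ℝ → ℝ := Set.indicator (Ioc (0:ℝ) 1) (fun _ => 1)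

private lemma gInd_nonneg : ∀ t, 0 ≤ gInd t := fun t =>
  Set.indicator_nonneg (fun _ _ => zero_le_one) t

private lemma gInd_le_one : ∀ t, gInd t ≤ 1 := by
  intro t
  unfold gInd
  by_cases h : t ∈ Ioc (0:ℝ) 1
  · rw [indicator_of_mem h]
  · rw [indicator_of_notMem h]; norm_num

private lemma gInd_int : Integrable gInd := by
  unfold gInd
  rw [integrable_indicator_iff measurableSet_Ioc]
  exact (integrableOn_const_iff).mpr (Or.inr (by rw [Real.volume_Ioc]; exact ENNReal.ofReal_lt_top))

private lemma gInd_total : ∫ t, gInd t = 1 := by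
  unfold gInd
  rw [integral_indicator_const (1:ℝ) measurableSet_Ioc, Real.volume_real_Ioc_of_le (by norm_num), smul_eq_mul]
  norm_num

private lemma gInd_interval_one {a b : ℝ} (hab : a ≤ b) (hsub : Ioc a b ⊆ Ioc (0:ℝ) 1) :
    ∫ t in a..b, gInd t = b - a := by
  rw [intervalIntegral.integral_of_le hab]
  unfold gInd
  rw [setIntegral_congr_fun measurableSet_Ioc
      (fun t ht => Set.indicator_of_mem (hsub ht) (fun _ => (1:ℝ))),
    setIntegral_const, Real.volume_real_Ioc_of_le (by linarith), smul_eq_mul,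
    mul_one]

private lemma gInd_interval_zero {a b : ℝ} (hab : a ≤ b)
    (h : ∀ t ∈ Ioc a b, t ∉ Ioc (0:ℝ) 1) :
    ∫ t in a..b, gInd t = 0 := by
  rw [intervalIntegral.integral_of_le hab]
  unfold gInd
  rw [setIntegral_congr_fun measurableSet_Ioc
      (fun t ht => Set.indicator_of_notMem (h t ht) (fun _ => (1:ℝ)))]
  simp

private lemma gInd_unit : ∫ t in (0:ℝ)..1, gInd t = 1 := by
  rw [gInd_interval_one (by norm_num) (by intro t ht; exact ht)]
  norm_num

private lemma term_le_one (x δ : ℝ) (hδ : 0 < δ) :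
    (1 / (2 * δ)) * ∫ t in x - δ..x + δ, |gInd t| ≤ 1 := by
  have hle : x - δ ≤ x + δ := by linarith
  have h1 : ∫ t in x - δ..x + δ, |gInd t| ≤ ∫ t in x - δ..x + δ, (1:ℝ) := by
    apply intervalIntegral.integral_mono_on hle
      gInd_int.abs.intervalIntegrable intervalIntegrable_const
    intro t _
    rw [abs_of_nonneg (gInd_nonneg t)]
    exact gInd_le_one t
  rw [intervalIntegral.integral_const, smul_eq_mul, mul_one] at h1
  calc (1 / (2 * δ)) * ∫ t in x - δ..x + δ, |gInd t|
      ≤ (1 / (2 * δ)) * (x + δ - (x - δ)) := by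
        apply mul_le_mul_of_nonneg_left h1 (by positivity)
    _ = 1 := by field_simp; ring

private lemma max_lb (x δ : ℝ) (hδ : 0 < δ) :
    (1 / (2 * δ)) * ∫ t in x - δ..x + δ, gInd t ≤ centeredMaximal gInd x := by
  have hb : BddAbove (range fun δ' : {δ : ℝ // 0 < δ} =>
      (1 / (2 * δ'.1)) * ∫ t in x - δ'.1..x + δ'.1, |gInd t|) := by
    refine ⟨1, ?_⟩
    rintro _ ⟨⟨δ', hδ'⟩, rfl⟩
    exact term_le_one x δ' hδ'
  have h := le_ciSup hb ⟨δ, hδ⟩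
  unfold centeredMaximal
  simpa only [fun t => abs_of_nonneg (gInd_nonneg t)] using h

theorem weak_type_one_one_peak_shaped :
    (∀ (f : ℝ → ℝ) (c : ℝ), (∀ x, 0 ≤ f x) → Integrable f →
      MonotoneOn f (Iio c) → AntitoneOn f (Ioi c) →
      ∀ lam : ℝ, 0 < lam →
        volume {x : ℝ | lam < centeredMaximal f x} ≤ ENNReal.ofReal ((∫ t, f t) / lam)) ∧
    (∀ C : ℝ, C < 1 → ∃ (f : ℝ → ℝ) (c : ℝ) (lam : ℝ),
      (∀ x, 0 ≤ f x) ∧ Integrable f ∧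
      MonotoneOn f (Iio c) ∧ AntitoneOn f (Ioi c) ∧ 0 < lam ∧
      ENNReal.ofReal (C * (∫ t, f t) / lam) < volume {x : ℝ | lam < centeredMaximal f x}) := by
  constructor
  · intro f c hf hint hmono hanti lam hlam
    set E := {x : ℝ | lam < centeredMaximal f x} with hE
    rcases Set.eq_empty_or_nonempty E with hemp | ⟨x₀, hx₀⟩
    · rw [hemp]; simp
    · set D := (∫ t, f t) / lam with hDdef
      have key : ∀ x ∈ E, ∀ y ∈ E, y - x ≤ D := by
        intro x hx y hy
        rcases le_total x y with h | h
        · have hp := pair_bound hf hint hmono hanti hlam h hx hy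
          rw [hDdef, le_div_iff₀ hlam]
          linarith
        · have hD0 : 0 ≤ D := div_nonneg (integral_nonneg hf) hlam.le
          linarith
      have hbdd : BddBelow E := ⟨x₀ - D, fun y hy => by linarith [key y hy x₀ hx₀]⟩
      have hsub : E ⊆ Icc (sInf E) (sInf E + D) := by
        intro y hy
        refine ⟨csInf_le hbdd hy, ?_⟩
        have : y - D ≤ sInf E := le_csInf ⟨x₀, hx₀⟩ (fun x hx => by linarith [key x hx y hy])
        linarith
      calc volume E ≤ volume (Icc (sInf E) (sInf E + D)) := measure_mono hsub
        _ = ENNReal.ofReal D := by rw [Real.volume_Icc]; congr 1; ring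
  · intro C hC
    set lam := min (1 - C) 1 / 2 with hlamdef
    have hlam : 0 < lam := div_pos (lt_min (by linarith) one_pos) two_pos
    have hlam2 : lam ≤ 1 / 2 := by
      have := min_le_right (1 - C) 1
      rw [hlamdef]; linarith
    have hlamC : lam < 1 - C := by
      have h1 := min_le_left (1 - C) 1
      have h2 : (0:ℝ) < 1 - C := by linarith
      rw [hlamdef]; linarith
    refine ⟨gInd, 1/2, lam, gInd_nonneg, gInd_int, ?_, ?_, hlam, ?_⟩
    · intro a ha b hb hab
      by_cases hmem : a ∈ Ioc (0:ℝ) 1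
      · have hbmem : b ∈ Ioc (0:ℝ) 1 := ⟨lt_of_lt_of_le hmem.1 hab, by
          have : b < 1/2 := hb
          linarith⟩
        unfold gInd
        rw [indicator_of_mem hmem, indicator_of_mem hbmem]
      · have : gInd a = 0 := indicator_of_notMem hmem _
        rw [this]
        exact gInd_nonneg b
    · intro a ha b hb hab
      by_cases hmem : b ∈ Ioc (0:ℝ) 1
      · have hamem : a ∈ Ioc (0:ℝ) 1 := ⟨by
          have : (1:ℝ)/2 < a := ha
          linarith, le_trans hab hmem.2⟩
        unfold gInd
        rw [indicator_of_mem hmem, indicator_of_mem hamem]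
      · have : gInd b = 0 := indicator_of_notMem hmem _
        rw [this]
        exact gInd_nonneg a
    · have hsub : Ioo (1 - 1/(2*lam)) (1/(2*lam)) ⊆ {x : ℝ | lam < centeredMaximal gInd x} := by
        intro x hx
        show lam < centeredMaximal gInd x
        rcases le_or_gt x 0 with hx0 | hx0
        · -- δ = 1 - x, interval [2x-1, 1]
          have hδ : (0:ℝ) < 1 - x := by linarith
          have hcalc : ∫ t in x - (1 - x)..x + (1 - x), gInd t = 1 := by
            have e1 : x - (1 - x) = 2*x - 1 := by ring
            have e2 : x + (1 - x) = 1 := by ring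
            rw [e1, e2, ← intervalIntegral.integral_add_adjacent_intervals (b := 0)
              gInd_int.intervalIntegrable gInd_int.intervalIntegrable,
              gInd_interval_zero (by linarith) (fun t ht hmem => by
                have := ht.2; have := hmem.1; linarith),
              gInd_unit]
            norm_num
          refine lt_of_lt_of_le ?_ (max_lb x (1 - x) hδ)
          rw [hcalc, mul_one]
          have h2l : (0:ℝ) < 2 * lam := by linarith
          have h1x : 1 - x < 1 / (2 * lam) := by
            have := hx.1; linarith
          have hkey := (lt_div_iff₀ h2l).mp h1x
          rw [lt_div_iff₀ (by positivity : (0:ℝ) < 2 * (1 - x))]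
          nlinarith
        rcases lt_or_ge x 1 with hx1 | hx1
        · -- 0 < x < 1, δ = min x (1-x)
          set δ := min x (1 - x) with hδdef
          have hδ : 0 < δ := lt_min hx0 (by linarith)
          have hδx : δ ≤ x := min_le_left _ _
          have hδ1x : δ ≤ 1 - x := min_le_right _ _
          have hcalc : ∫ t in x - δ..x + δ, gInd t = (x + δ) - (x - δ) :=
            gInd_interval_one (by linarith)
              (fun t ht => ⟨by have := ht.1; linarith, by have := ht.2; linarith⟩)
          refine lt_of_lt_of_le ?_ (max_lb x δ hδ)
          rw [hcalc]
          have : (1 / (2 * δ)) * ((x + δ) - (x - δ)) = 1 := by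
            field_simp; ring
          rw [this]
          linarith
        · -- x ≥ 1, δ = x, interval [0, 2x]
          have hcalc : ∫ t in x - x..x + x, gInd t = 1 := by
            have e1 : x - x = 0 := by ring
            have e2 : x + x = 2 * x := by ring
            rw [e1, e2, ← intervalIntegral.integral_add_adjacent_intervals (b := 1)
              gInd_int.intervalIntegrable gInd_int.intervalIntegrable,
              gInd_unit,
              gInd_interval_zero (by linarith) (fun t ht hmem => by
                have := ht.1; have := hmem.2; linarith)]
            norm_num
          refine lt_of_lt_of_le ?_ (max_lb x x hx0)
          rw [hcalc, mul_one]
          have h2l : (0:ℝ) < 2 * lam := by linarith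
          have hxx : x < 1 / (2 * lam) := hx.2
          have hkey := (lt_div_iff₀ h2l).mp hxx
          rw [lt_div_iff₀ (by positivity : (0:ℝ) < 2 * x)]
          nlinarith
      have hvol : ENNReal.ofReal (1/lam - 1) ≤ volume {x : ℝ | lam < centeredMaximal gInd x} := by
        calc ENNReal.ofReal (1/lam - 1)
            = volume (Ioo (1 - 1/(2*lam)) (1/(2*lam))) := by
              rw [Real.volume_Ioo]
              congr 1
              field_simp
              ring
          _ ≤ _ := measure_mono hsub
      refine lt_of_lt_of_le ?_ hvol
      rw [gInd_total]
      have hinv : (2:ℝ) ≤ 1 / lam := by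
        rw [le_div_iff₀ hlam]; linarith
      apply (ENNReal.ofReal_lt_ofReal_iff (by linarith)).mpr
      rw [mul_one]
      have heq : (1/lam - 1) * lam = 1 - lam := by field_simp
      rw [div_lt_iff₀ hlam, heq]  -- wrong direction? goal: C / lam < 1/lam - 1
      linarith
end

section
/- Let f : ℝ → ℝ be continuous, nonnegative, with compact support, and let x ≠ 0. Suppose δ₀ > 0 is a point where t ↦ ξ_x(t) = (1/(2t)) ∫_{x-t}^{x+t} f(u) du attains its maximum over (0, ∞), so that (Mf)(x) = ξ_x(δ₀). Then (Mf)(x) = (f(x+δ₀) + f(x-δ₀))/2. -/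
open MeasureTheory Set

theorem maximal_eq_average_of_endpoints (f : ℝ → ℝ)
    (hf_cont : Continuous f) (hf_nonneg : ∀ x, 0 ≤ f x)
    (hf_supp : HasCompactSupport f)
    (x : ℝ) (hx : x ≠ 0) (δ₀ : ℝ) (hδ₀ : 0 < δ₀)
    (hmax : ∀ t : ℝ, 0 < t →
      (1 / (2 * t)) * ∫ u in x - t..x + t, f u ≤
        (1 / (2 * δ₀)) * ∫ u in x - δ₀..x + δ₀, f u)
    (hM : centeredMaximal f x = (1 / (2 * δ₀)) * ∫ u in x - δ₀..x + δ₀, f u) :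
    centeredMaximal f x = (f (x + δ₀) + f (x - δ₀)) / 2 := by
  set G : ℝ → ℝ := fun t => ∫ u in x - t..x + t, f u with hGdef
  -- antiderivative
  have hH : ∀ y : ℝ, HasDerivAt (fun y => ∫ u in x..y, f u) (f y) y := fun y =>
    intervalIntegral.integral_hasDerivAt_right (hf_cont.intervalIntegrable x y)
      (hf_cont.stronglyMeasurableAtFilter _ _) hf_cont.continuousAt
  have hGsplit : ∀ t : ℝ, G t = (∫ u in x..x + t, f u) - ∫ u in x..x - t, f u := by
    intro t
    rw [intervalIntegral.integral_interval_sub_left (hf_cont.intervalIntegrable _ _)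
      (hf_cont.intervalIntegrable _ _)]
  have hG' : HasDerivAt G (f (x + δ₀) + f (x - δ₀)) δ₀ := by
    have h1 : HasDerivAt (fun t : ℝ => ∫ u in x..x + t, f u) (f (x + δ₀) * 1) δ₀ :=
      (hH (x + δ₀)).comp δ₀ ((hasDerivAt_id δ₀).const_add x)
    have h2 : HasDerivAt (fun t : ℝ => ∫ u in x..x - t, f u) (f (x - δ₀) * (-1)) δ₀ :=
      (hH (x - δ₀)).comp δ₀ ((hasDerivAt_id δ₀).neg.const_add x)
    have : HasDerivAt (fun t : ℝ => (∫ u in x..x + t, f u) - ∫ u in x..x - t, f u)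
        (f (x + δ₀) * 1 - f (x - δ₀) * (-1)) δ₀ := h1.sub h2
    have heq : (fun t : ℝ => (∫ u in x..x + t, f u) - ∫ u in x..x - t, f u) = G := by
      funext t; rw [hGsplit t]
    rw [heq] at this
    convert this using 1; ring
  have hd : HasDerivAt (fun t : ℝ => t) 1 δ₀ := hasDerivAt_id δ₀
  have hden : (2 : ℝ) * δ₀ ≠ 0 := by positivity
  have hξ : HasDerivAt (fun t => G t / (2 * t))
      (((f (x + δ₀) + f (x - δ₀)) * (2 * δ₀) - G δ₀ * 2) / (2 * δ₀) ^ 2) δ₀ := by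
    have h2t : HasDerivAt (fun t : ℝ => 2 * t) 2 δ₀ := by
      simpa using hd.const_mul 2
    exact hG'.div h2t hden
  have hloc : IsLocalMax (fun t => G t / (2 * t)) δ₀ := by
    filter_upwards [Ioi_mem_nhds hδ₀] with t ht
    have h1 := hmax t ht
    have h2 : (2 : ℝ) * t ≠ 0 := ne_of_gt (by linarith [mem_Ioi.mp ht])
    calc G t / (2 * t) = 1 / (2 * t) * G t := by field_simp
    _ ≤ 1 / (2 * δ₀) * G δ₀ := h1
    _ = G δ₀ / (2 * δ₀) := by field_simp
  have hzero := hloc.hasDerivAt_eq_zero hξ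
  have hkey : (f (x + δ₀) + f (x - δ₀)) * (2 * δ₀) = G δ₀ * 2 := by
    have hsq : ((2 : ℝ) * δ₀) ^ 2 ≠ 0 := pow_ne_zero _ hden
    field_simp at hzero
    linarith
  rw [hM]
  show 1 / (2 * δ₀) * G δ₀ = (f (x + δ₀) + f (x - δ₀)) / 2
  field_simp
  linarith
end

section
/- Fix p > 1 and α ∈ (1/2, 1) with β as in (2.8). Let g : ℝ \ {0} → (0,∞) be twice differentiable with g'(x) ≠ 0 and g''(x) defined for x ≠ 0. Then s₀(x) = −β g(x)/g'(x) solves the Euler–Lagrange equation (d/dx)[∂_z F(x, φ(x), φ'(x))] = ∂_y F(x, φ(x), φ'(x)) on ℝ \ {0}, where F(x,y,z) = α(g(x)+g'(x)y)^p(z+1) + (1-α)(g(x)−g'(x)y)^p(z−1). -/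
/-- Lemma 3: `s₀(x) = -β g(x)/g'(x)` solves the Euler–Lagrange equation
`(d/dx)[∂_z F(x, φ(x), φ'(x))] = ∂_y F(x, φ(x), φ'(x))` on `ℝ \ {0}`, where
`F(x,y,z) = α(g+g'y)^p(z+1) + (1-α)(g−g'y)^p(z−1)`.  Note that
`∂_z F(x,y,z) = α(g+g'y)^p + (1-α)(g−g'y)^p` and
`∂_y F(x,y,z) = p g'(x)[α(g+g'y)^{p-1}(z+1) − (1-α)(g−g'y)^{p-1}(z−1)]`. -/
theorem s0_solves_euler_lagrange (p α : ℝ) (hp : 1 < p) (hα : 1 / 2 < α) (hα' : α < 1)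
    (g : ℝ → ℝ) (hg_diff : DifferentiableOn ℝ g {0}ᶜ)
    (hg'_diff : DifferentiableOn ℝ (deriv g) {0}ᶜ)
    (hg_pos : ∀ x ≠ 0, 0 < g x) (hg' : ∀ x ≠ 0, deriv g x ≠ 0) :
    let β := (α ^ (1 / (p - 1)) - (1 - α) ^ (1 / (p - 1))) /
             (α ^ (1 / (p - 1)) + (1 - α) ^ (1 / (p - 1)))
    let s₀ : ℝ → ℝ := fun x => -β * g x / deriv g x
    ∀ x : ℝ, x ≠ 0 →
      deriv (fun u => α * (g u + deriv g u * s₀ u) ^ p +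
          (1 - α) * (g u - deriv g u * s₀ u) ^ p) x =
        p * deriv g x *
          (α * (g x + deriv g x * s₀ x) ^ (p - 1) * (deriv s₀ x + 1) -
            (1 - α) * (g x - deriv g x * s₀ x) ^ (p - 1) * (deriv s₀ x - 1)) := by
  intro β s₀ x hx
  have hp1 : (0:ℝ) < p - 1 := by linarith
  have hαpos : (0:ℝ) < α := by linarith
  have h1α : (0:ℝ) < 1 - α := by linarith
  set a := α ^ (1 / (p - 1)) with ha
  set b := (1 - α) ^ (1 / (p - 1)) with hb
  have hapos : 0 < a := Real.rpow_pos_of_pos hαpos _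
  have hbpos : 0 < b := Real.rpow_pos_of_pos h1α _
  have habpos : 0 < a + b := by linarith
  have hβdef : β = (a - b) / (a + b) := rfl
  have hβ1 : 1 - β = 2 * b / (a + b) := by
    rw [hβdef]; field_simp; ring
  have hβ2 : 1 + β = 2 * a / (a + b) := by
    rw [hβdef]; field_simp; ring
  have h1βpos : 0 < 1 - β := by rw [hβ1]; positivity
  have h1β2pos : 0 < 1 + β := by rw [hβ2]; positivity
  have hpow_a : a ^ (p - 1) = α := by
    rw [ha, ← Real.rpow_mul hαpos.le, one_div, inv_mul_cancel₀ hp1.ne', Real.rpow_one]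
  have hpow_b : b ^ (p - 1) = 1 - α := by
    rw [hb, ← Real.rpow_mul h1α.le, one_div, inv_mul_cancel₀ hp1.ne', Real.rpow_one]
  have key : α * (1 - β) ^ (p - 1) = (1 - α) * (1 + β) ^ (p - 1) := by
    rw [hβ1, hβ2, ← hpow_b, ← hpow_a, ← Real.mul_rpow hapos.le (by positivity),
        ← Real.mul_rpow hbpos.le (by positivity)]
    congr 1
    field_simp
  have hmem : {0}ᶜ ∈ nhds x := isOpen_compl_singleton.mem_nhds hx
  have heq : ∀ u : ℝ, u ≠ 0 →
      (g u + deriv g u * s₀ u = (1 - β) * g u) ∧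
      (g u - deriv g u * s₀ u = (1 + β) * g u) := by
    intro u hu
    have hgu := hg' u hu
    have h1 : deriv g u * s₀ u = -β * g u := by
      show deriv g u * (-β * g u / deriv g u) = _
      field_simp
    constructor <;> rw [h1] <;> ring
  have hev : (fun u => α * (g u + deriv g u * s₀ u) ^ p +
      (1 - α) * (g u - deriv g u * s₀ u) ^ p) =ᶠ[nhds x]
      (fun u => α * ((1 - β) * g u) ^ p + (1 - α) * ((1 + β) * g u) ^ p) := by
    filter_upwards [hmem] with u hu
    obtain ⟨e1, e2⟩ := heq u hu
    rw [e1, e2]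
  have hgx : HasDerivAt g (deriv g x) x :=
    (hg_diff.differentiableAt hmem).hasDerivAt
  have hd1 : HasDerivAt (fun u => (1 - β) * g u) ((1 - β) * deriv g x) x :=
    hgx.const_mul _
  have hd2 : HasDerivAt (fun u => (1 + β) * g u) ((1 + β) * deriv g x) x :=
    hgx.const_mul _
  have hd1p : HasDerivAt (fun u => ((1 - β) * g u) ^ p)
      ((1 - β) * deriv g x * p * ((1 - β) * g x) ^ (p - 1)) x :=
    hd1.rpow_const (Or.inr hp.le)
  have hd2p : HasDerivAt (fun u => ((1 + β) * g u) ^ p)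
      ((1 + β) * deriv g x * p * ((1 + β) * g x) ^ (p - 1)) x :=
    hd2.rpow_const (Or.inr hp.le)
  have hD : HasDerivAt (fun u => α * ((1 - β) * g u) ^ p + (1 - α) * ((1 + β) * g u) ^ p)
      (α * ((1 - β) * deriv g x * p * ((1 - β) * g x) ^ (p - 1)) +
       (1 - α) * ((1 + β) * deriv g x * p * ((1 + β) * g x) ^ (p - 1))) x :=
    (hd1p.const_mul α).add (hd2p.const_mul (1 - α))
  rw [hev.deriv_eq, hD.deriv]
  obtain ⟨e1, e2⟩ := heq x hx
  rw [e1, e2]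
  have hgpos := hg_pos x hx
  rw [Real.mul_rpow h1βpos.le hgpos.le, Real.mul_rpow h1β2pos.le hgpos.le]
  linear_combination (p * deriv g x * g x ^ (p - 1) * (-β - deriv s₀ x)) * key
end

section
/- Fix p > 1 and α ∈ (1/2, 1) with β = β(α) as in (2.8). Define γ₁(α) = α(1-β)^p − (1-α)(1+β)^p, γ₂(α) = α(1-β)^p + (1-α)(1+β)^p, and r(α) = γ₁(α) + pβ(α)γ₂(α). Then r(α) = 2^p (p-1) α(1-α)(α^{1/(p-1)} − (1-α)^{1/(p-1)}) / (α^{1/(p-1)} + (1-α)^{1/(p-1)})^p. -/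
theorem r_alpha_closed_form (p α : ℝ) (hp : 1 < p) (hα : 1 / 2 < α) (hα' : α < 1) :
    let β := (α ^ (1 / (p - 1)) - (1 - α) ^ (1 / (p - 1))) /
             (α ^ (1 / (p - 1)) + (1 - α) ^ (1 / (p - 1)))
    let γ₁ := α * (1 - β) ^ p - (1 - α) * (1 + β) ^ p
    let γ₂ := α * (1 - β) ^ p + (1 - α) * (1 + β) ^ p
    γ₁ + p * β * γ₂ =
      2 ^ p * (p - 1) * α * (1 - α) * (α ^ (1 / (p - 1)) - (1 - α) ^ (1 / (p - 1))) /
        (α ^ (1 / (p - 1)) + (1 - α) ^ (1 / (p - 1))) ^ p := by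
  have hα0 : (0:ℝ) < α := by linarith
  have h1α : (0:ℝ) < 1 - α := by linarith
  set a := α ^ (1 / (p - 1)) with ha_def
  set b := (1 - α) ^ (1 / (p - 1)) with hb_def
  have ha : 0 < a := Real.rpow_pos_of_pos hα0 _
  have hb : 0 < b := Real.rpow_pos_of_pos h1α _
  have hs : 0 < a + b := by linarith
  have hp1 : p - 1 ≠ 0 := by intro h; nlinarith
  intro β γ₁ γ₂
  have hβ : β = (a - b) / (a + b) := rfl
  have hγ₁ : γ₁ = α * (1 - β) ^ p - (1 - α) * (1 + β) ^ p := rfl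
  have hγ₂ : γ₂ = α * (1 - β) ^ p + (1 - α) * (1 + β) ^ p := rfl
  have hexp : 1 / (p - 1) * p = 1 + 1 / (p - 1) := by field_simp; ring
  have hap : a ^ p = α * a := by
    rw [ha_def, ← Real.rpow_mul hα0.le, hexp, Real.rpow_add hα0, Real.rpow_one]
  have hbp : b ^ p = (1 - α) * b := by
    rw [hb_def, ← Real.rpow_mul h1α.le, hexp, Real.rpow_add h1α, Real.rpow_one]
  have h1mβ : 1 - β = 2 * b / (a + b) := by rw [hβ]; field_simp; ring
  have h1pβ : 1 + β = 2 * a / (a + b) := by rw [hβ]; field_simp; ring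
  have e1 : (1 - β) ^ p = 2 ^ p * b ^ p / (a + b) ^ p := by
    rw [h1mβ, Real.div_rpow (by positivity) hs.le,
      Real.mul_rpow (by norm_num) hb.le]
  have e2 : (1 + β) ^ p = 2 ^ p * a ^ p / (a + b) ^ p := by
    rw [h1pβ, Real.div_rpow (by positivity) hs.le,
      Real.mul_rpow (by norm_num) ha.le]
  have hSp : (0:ℝ) < (a + b) ^ p := Real.rpow_pos_of_pos hs _
  rw [hγ₁, hγ₂, e1, e2, hap, hbp, hβ]
  field_simp
  ring
end

section
/- Fix p > 1 and let τ ∈ (1, p) satisfy ((p+τ)/(p−τ))^p = (τ+1)/(τ−1). Set α₀ = (p+τ)^{p-1} / ((p+τ)^{p-1} + (p−τ)^{p-1}). Then 1/2 < α₀ < 1, and r(α₀) = h(τ)^{-p}, where r is the function r(α) = 2^p(p-1)α(1-α)(α^{1/(p-1)} − (1-α)^{1/(p-1)})/(α^{1/(p-1)} + (1-α)^{1/(p-1)})^p and h(τ) = ((τ+1)^{(p-1)/p} + (τ-1)^{(p-1)/p})/(2(p-1)τ/p). -/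
theorem r_alpha0_eq_h_tau_pow (p τ : ℝ) (hp : 1 < p) (hτ : 1 < τ) (hτp : τ < p)
    (hτeq : ((p + τ) / (p - τ)) ^ p = (τ + 1) / (τ - 1)) :
    let α₀ := (p + τ) ^ (p - 1) / ((p + τ) ^ (p - 1) + (p - τ) ^ (p - 1))
    let r : ℝ → ℝ := fun α =>
      2 ^ p * (p - 1) * α * (1 - α) * (α ^ (1 / (p - 1)) - (1 - α) ^ (1 / (p - 1))) /
        (α ^ (1 / (p - 1)) + (1 - α) ^ (1 / (p - 1))) ^ p
    let h : ℝ → ℝ := fun t =>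
      ((t + 1) ^ ((p - 1) / p) + (t - 1) ^ ((p - 1) / p)) / (2 * (p - 1) * t / p)
    1 / 2 < α₀ ∧ α₀ < 1 ∧ r α₀ = h τ ^ (-p) := by
  intro α₀ r h
  have hp0 : (0:ℝ) < p := by linarith
  have hp1 : (0:ℝ) < p - 1 := by linarith
  have hu0 : (0:ℝ) < p + τ := by linarith
  have hv0 : (0:ℝ) < p - τ := by linarith
  have hτ1 : (0:ℝ) < τ - 1 := by linarith
  have hτ1' : (0:ℝ) < τ + 1 := by linarith
  set A := (p + τ) ^ (p - 1) with hAdef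
  set B := (p - τ) ^ (p - 1) with hBdef
  have hA0 : 0 < A := Real.rpow_pos_of_pos hu0 _
  have hB0 : 0 < B := Real.rpow_pos_of_pos hv0 _
  have hBA : B < A := Real.rpow_lt_rpow hv0.le (by linarith) hp1
  have hAB0 : 0 < A + B := by linarith
  have hα : α₀ = A / (A + B) := rfl
  have h1α : 1 - α₀ = B / (A + B) := by rw [hα]; field_simp; ring
  refine ⟨?_, ?_, ?_⟩
  · rw [hα, lt_div_iff₀ hAB0]; linarith
  · rw [hα, div_lt_one hAB0]; linarith
  -- main computation
  set W := (A + B) ^ (1 / (p - 1)) with hWdef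
  have hW0 : 0 < W := Real.rpow_pos_of_pos hAB0 _
  have e1 : α₀ ^ (1 / (p - 1)) = (p + τ) / W := by
    rw [hα, Real.div_rpow hA0.le hAB0.le, hAdef, ← Real.rpow_mul hu0.le,
      mul_one_div, div_self hp1.ne', Real.rpow_one]
  have e2 : (1 - α₀) ^ (1 / (p - 1)) = (p - τ) / W := by
    rw [h1α, Real.div_rpow hB0.le hAB0.le, hBdef, ← Real.rpow_mul hv0.le,
      mul_one_div, div_self hp1.ne', Real.rpow_one]
  have hexp : (1 / (p - 1)) * p = 1 + 1 / (p - 1) := by field_simp; ring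
  have hWp : W ^ p = (A + B) * W := by
    rw [hWdef, ← Real.rpow_mul hAB0.le, hexp, Real.rpow_add hAB0, Real.rpow_one]
  -- the constraint
  have hup0 : 0 < (p + τ) ^ p := Real.rpow_pos_of_pos hu0 p
  have hvp0 : 0 < (p - τ) ^ p := Real.rpow_pos_of_pos hv0 p
  have hcross : (τ - 1) * (p + τ) ^ p = (τ + 1) * (p - τ) ^ p := by
    have h' := hτeq
    rw [Real.div_rpow hu0.le hv0.le, div_eq_div_iff hvp0.ne' hτ1.ne'] at h'
    linarith
  set c := (τ - 1) / (p - τ) ^ p with hcdef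
  have hc0 : 0 < c := div_pos hτ1 hvp0
  have hcu : c * (p + τ) ^ p = τ + 1 := by
    rw [hcdef, div_mul_eq_mul_div, div_eq_iff hvp0.ne']
    linarith
  have hcv : c * (p - τ) ^ p = τ - 1 := by
    rw [hcdef, div_mul_cancel₀ _ hvp0.ne']
  have hAu : A * (p + τ) = (p + τ) ^ p := by
    rw [hAdef, ← Real.rpow_add_one hu0.ne']
    norm_num
  have hBv : B * (p - τ) = (p - τ) ^ p := by
    rw [hBdef, ← Real.rpow_add_one hv0.ne']
    norm_num
  have h2pt : (0:ℝ) < 2 * (p - 1) * τ := by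
    apply mul_pos (mul_pos two_pos hp1); linarith
  have hval : c * (A + B) * ((p + τ) * (p - τ)) = 2 * (p - 1) * τ := by
    have h1 : c * (A + B) * ((p + τ) * (p - τ))
        = (c * (A * (p + τ))) * (p - τ) + (c * (B * (p - τ))) * (p + τ) := by ring
    rw [h1, hAu, hBv, hcu, hcv]; ring
  have hABmul : A * B = ((p + τ) * (p - τ)) ^ (p - 1) :=
    (Real.mul_rpow hu0.le hv0.le).symm
  have hkey : c ^ (p - 1) * (A + B) ^ (p - 1) * (A * B) = (2 * (p - 1) * τ) ^ (p - 1) := by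
    rw [hABmul, ← Real.mul_rpow hc0.le hAB0.le,
      ← Real.mul_rpow (mul_nonneg hc0.le hAB0.le) (mul_nonneg hu0.le hv0.le), hval]
  -- compute r α₀
  have hr : r α₀ = 2 * (p - 1) * τ * (A * B) / ((A + B) * p ^ p) := by
    show 2 ^ p * (p - 1) * α₀ * (1 - α₀) * (α₀ ^ (1 / (p - 1)) - (1 - α₀) ^ (1 / (p - 1))) /
        (α₀ ^ (1 / (p - 1)) + (1 - α₀) ^ (1 / (p - 1))) ^ p = _
    rw [e1, e2, hα, h1α, div_sub_div_same, ← add_div,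
      show (p + τ) - (p - τ) = 2 * τ by ring, show (p + τ) + (p - τ) = 2 * p by ring,
      Real.div_rpow (by positivity) hW0.le, hWp,
      Real.mul_rpow (by norm_num : (0:ℝ) ≤ 2) hp0.le]
    have h2p0 : (0:ℝ) < (2:ℝ) ^ p := Real.rpow_pos_of_pos two_pos p
    have hpp0 : (0:ℝ) < p ^ p := Real.rpow_pos_of_pos hp0 p
    field_simp
  -- compute h τ
  have hcp : 0 < c ^ ((p - 1) / p) := Real.rpow_pos_of_pos hc0 _
  have hc'u : (τ + 1) ^ ((p - 1) / p) = c ^ ((p - 1) / p) * A := by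
    rw [← hcu, Real.mul_rpow hc0.le hup0.le, ← Real.rpow_mul hu0.le,
      show p * ((p - 1) / p) = p - 1 by field_simp, hAdef]
  have hc'v : (τ - 1) ^ ((p - 1) / p) = c ^ ((p - 1) / p) * B := by
    rw [← hcv, Real.mul_rpow hc0.le hvp0.le, ← Real.rpow_mul hv0.le,
      show p * ((p - 1) / p) = p - 1 by field_simp, hBdef]
  have hh : h τ = c ^ ((p - 1) / p) * (A + B) * p / (2 * (p - 1) * τ) := by
    show ((τ + 1) ^ ((p - 1) / p) + (τ - 1) ^ ((p - 1) / p)) / (2 * (p - 1) * τ / p) = _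
    rw [hc'u, hc'v]
    rw [div_div_eq_mul_div]
    congr 1
    ring
  have hhp : 0 < c ^ ((p - 1) / p) * (A + B) * p / (2 * (p - 1) * τ) :=
    div_pos (mul_pos (mul_pos hcp hAB0) hp0) h2pt
  have hABp : (A + B) ^ p = (A + B) ^ (p - 1) * (A + B) := by
    rw [← Real.rpow_add_one hAB0.ne']; norm_num
  have h2τp : (2 * (p - 1) * τ) ^ p = (2 * (p - 1) * τ) ^ (p - 1) * (2 * (p - 1) * τ) := by
    rw [← Real.rpow_add_one h2pt.ne']; norm_num
  have hfinal : h τ ^ (-p) = 2 * (p - 1) * τ * (A * B) / ((A + B) * p ^ p) := by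
    rw [hh, Real.rpow_neg hhp.le,
      Real.div_rpow (by positivity) h2pt.le,
      Real.mul_rpow (by positivity) hp0.le,
      Real.mul_rpow hcp.le hAB0.le,
      ← Real.rpow_mul hc0.le, show (p - 1) / p * p = p - 1 by field_simp,
      hABp, h2τp, ← hkey]
    have hpp0 : (0:ℝ) < p ^ p := Real.rpow_pos_of_pos hp0 p
    have hcp1 : (0:ℝ) < c ^ (p - 1) := Real.rpow_pos_of_pos hc0 _
    have hABp1 : (0:ℝ) < (A + B) ^ (p - 1) := Real.rpow_pos_of_pos hAB0 _
    field_simp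
  rw [hr, hfinal]
end
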